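/- Let p > 3 be a prime with p ≡ 3 (mod 4), and work in the quaternion algebra B = ℍ[ℚ, −1, −p] with basis 1, i, j, k (i² = −1, j² = −p, k = ij). Let O be the ℤ-span of {1, i, (1+j)/2, (i+k)/2} in B, and let O^T = {2x − trd(x) : x ∈ O} be its Gross lattice. Set β₁ = 2i, β₂ = j, β₃ = i − k. Then: (a) O^T equals the ℤ-span of {β₁, β₂, β₃}; (b) with pairing (x, y) = (1/2)·trd(x·ȳ), the Gram matrix of (β₁, β₂, β₃) is [[4, 0, 2], [0, p, 0], [2, 0, p+1]]; and (c) this basis attains the successive minima of O^T, namely D₁ = 4, D₂ = p, D₃ = p + 1; in particular every nonzero element of O^T has nrd ≥ 4, every element of O^T outside the ℝ-span of β₁ has nrd ≥ p, and every element of O^T outside the ℝ-span of {β₁, β₂} has nrd ≥ p + 1. -/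

import Mathlib

open scoped Quaternion

private lemma one_le_sq {b : ℤ} (h : b ≠ 0) : 1 ≤ b ^ 2 := by
  rcases h.lt_or_gt with h | h <;> nlinarith

private lemma nrd_formula (p : ℚ) (x : ℍ[ℚ, -1, -p]) :
    (x * star x).re = x.re ^ 2 + x.imI ^ 2 + p * x.imJ ^ 2 + p * x.imK ^ 2 := by
  simp [QuaternionAlgebra.re_mul]; ring

private lemma ineq1 {P a b c : ℤ} (hP : 7 ≤ P) (h : ¬(a = 0 ∧ b = 0 ∧ c = 0)) :
    4 ≤ (2 * a + c) ^ 2 + P * b ^ 2 + P * c ^ 2 := by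
  by_cases hb : b = 0
  · by_cases hc : c = 0
    · have ha : a ≠ 0 := by tauto
      have := one_le_sq ha
      subst hb hc; nlinarith
    · nlinarith [one_le_sq hc, sq_nonneg (2 * a + c), sq_nonneg b]
  · nlinarith [one_le_sq hb, sq_nonneg (2 * a + c), sq_nonneg c]

private lemma ineq2 {P a b c : ℤ} (hP : 7 ≤ P) (h : ¬(b = 0 ∧ c = 0)) :
    P ≤ (2 * a + c) ^ 2 + P * b ^ 2 + P * c ^ 2 := by
  by_cases hb : b = 0
  · have hc : c ≠ 0 := by tauto
    nlinarith [one_le_sq hc, sq_nonneg (2 * a + c), sq_nonneg b]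
  · nlinarith [one_le_sq hb, sq_nonneg (2 * a + c), sq_nonneg c]

private lemma ineq3 {P a b c : ℤ} (hP : 7 ≤ P) (hc : c ≠ 0) :
    P + 1 ≤ (2 * a + c) ^ 2 + P * b ^ 2 + P * c ^ 2 := by
  rcases Int.even_or_odd c with ⟨d, hd⟩ | ⟨d, hd⟩
  · have hd0 : d ≠ 0 := by omega
    subst hd
    have h4 : 4 ≤ (d + d) ^ 2 := by nlinarith [one_le_sq hd0]
    have h5 : 4 * P ≤ P * (d + d) ^ 2 := by nlinarith
    nlinarith [sq_nonneg (2 * a + (d + d)), sq_nonneg b]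
  · have h1 : 2 * a + c ≠ 0 := by omega
    nlinarith [one_le_sq h1, one_le_sq hc, sq_nonneg b]

private lemma part_a (p : ℕ)
    (i j k : ℍ[ℚ, -1, -(p : ℚ)])
    (hi : i = ⟨0, 1, 0, 0⟩) (hj : j = ⟨0, 0, 1, 0⟩) (hk : k = i * j)
    (O : Submodule ℤ ℍ[ℚ, -1, -(p : ℚ)])
    (hO : O = Submodule.span ℤ
      ({1, i, ((1 : ℚ)/2) • (1 + j), ((1 : ℚ)/2) • (i + k)} : Set ℍ[ℚ, -1, -(p : ℚ)]))
    (β₁ β₂ β₃ : ℍ[ℚ, -1, -(p : ℚ)])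
    (hβ₁ : β₁ = 2 * i) (hβ₂ : β₂ = j) (hβ₃ : β₃ = i - k) :
    -- (a) the Gross lattice of `O` is spanned by `β₁, β₂, β₃`
    {y | ∃ x ∈ O, y = 2 * x - (x + star x)} =
      (Submodule.span ℤ ({β₁, β₂, β₃} : Set ℍ[ℚ, -1, -(p : ℚ)]) : Set ℍ[ℚ, -1, -(p : ℚ)]) := by
  have hk' : k = ⟨0, 0, 0, 1⟩ := by subst hk hi hj; ext <;> simp
  let f : ℍ[ℚ, -1, -(p : ℚ)] →ₗ[ℤ] ℍ[ℚ, -1, -(p : ℚ)] :=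
    { toFun := fun x => x - star x
      map_add' := by intro x y; simp only [star_add]; abel
      map_smul' := by intro n x; simp [star_smul, Int.cast_comm, smul_sub] }
  have hfx : ∀ x : ℍ[ℚ, -1, -(p : ℚ)], f x = x - star x := fun _ => rfl
  have hset : {y | ∃ x ∈ O, y = 2 * x - (x + star x)} = ↑(O.map f) := by
    ext y
    simp only [Submodule.mem_map, Set.mem_setOf_eq, SetLike.mem_coe]
    constructor
    · rintro ⟨x, hx, rfl⟩
      exact ⟨x, hx, by rw [hfx, two_mul]; abel⟩
    · rintro ⟨x, hx, rfl⟩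
      exact ⟨x, hx, by rw [hfx, two_mul]; abel⟩
  rw [hset, hO, Submodule.map_span]
  have e1 : f 1 = 0 := by rw [hfx]; simp
  have e2 : f i = β₁ := by rw [hfx, hβ₁, hi]; ext <;> simp [two_mul]
  have e3 : f (((1 : ℚ)/2) • (1 + j)) = β₂ := by
    rw [hfx, hβ₂, hj]; ext <;> simp <;> norm_num
  have e4 : f (((1 : ℚ)/2) • (i + k)) = β₁ - β₃ := by
    rw [hfx, hβ₁, hβ₃, hi, hk']; ext <;> simp [two_mul] <;> norm_num
  have himg : f '' ({1, i, ((1 : ℚ)/2) • (1 + j), ((1 : ℚ)/2) • (i + k)} :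
      Set ℍ[ℚ, -1, -(p : ℚ)]) = {0, β₁, β₂, β₁ - β₃} := by
    rw [Set.image_insert_eq, Set.image_insert_eq, Set.image_insert_eq, Set.image_singleton,
      e1, e2, e3, e4]
  rw [himg]
  have hspan : Submodule.span ℤ ({0, β₁, β₂, β₁ - β₃} : Set ℍ[ℚ, -1, -(p : ℚ)]) =
      Submodule.span ℤ ({β₁, β₂, β₃} : Set ℍ[ℚ, -1, -(p : ℚ)]) := by
    apply le_antisymm
    · rw [Submodule.span_le]
      intro x hx
      simp only [Set.mem_insert_iff, Set.mem_singleton_iff] at hx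
      rcases hx with rfl | rfl | rfl | rfl
      · exact Submodule.zero_mem _
      · exact Submodule.subset_span (by simp)
      · exact Submodule.subset_span (by simp)
      · exact Submodule.sub_mem _ (Submodule.subset_span (by simp))
          (Submodule.subset_span (by simp))
    · have h1 : β₁ ∈ ({0, β₁, β₂, β₁ - β₃} : Set ℍ[ℚ, -1, -(p : ℚ)]) := by simp
      have h2 : β₁ - β₃ ∈ ({0, β₁, β₂, β₁ - β₃} : Set ℍ[ℚ, -1, -(p : ℚ)]) := by simp
      have hm : β₃ ∈ Submodule.span ℤ ({0, β₁, β₂, β₁ - β₃} : Set ℍ[ℚ, -1, -(p : ℚ)]) := by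
        have := Submodule.sub_mem
          (Submodule.span ℤ ({0, β₁, β₂, β₁ - β₃} : Set ℍ[ℚ, -1, -(p : ℚ)]))
          (Submodule.subset_span h1) (Submodule.subset_span h2)
        simpa using this
      rw [Submodule.span_le]
      intro x hx
      simp only [Set.mem_insert_iff, Set.mem_singleton_iff] at hx
      rcases hx with rfl | rfl | rfl
      · exact Submodule.subset_span (by simp)
      · exact Submodule.subset_span (by simp)
      · exact hm
  rw [hspan]

/-- Normalized successive minimal basis of the Gross lattice of the supersingular elliptic
curve with `j`-invariant `1728` (for `p > 3`, `p ≡ 3 mod 4`): in `B = ℍ[ℚ, -1, -p]`, with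
`O = ⟨1, i, (1+j)/2, (i+k)/2⟩`, the Gross lattice `{2x - trd x : x ∈ O}` is spanned by
`β₁ = 2i`, `β₂ = j`, `β₃ = i - k`, whose Gram matrix (for the pairing
`(x,y) = (1/2)·trd(x·ȳ)`) is `[[4, 0, 2], [0, p, 0], [2, 0, p+1]]`, and this basis attains
the successive minima `D₁ = 4`, `D₂ = p`, `D₃ = p + 1`. -/
theorem stmt_13 (p : ℕ) (hp : p.Prime) (hp3 : 3 < p) (hmod : p % 4 = 3)
    (i j k : ℍ[ℚ, -1, -(p : ℚ)])
    (hi : i = ⟨0, 1, 0, 0⟩) (hj : j = ⟨0, 0, 1, 0⟩) (hk : k = i * j)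
    (O : Submodule ℤ ℍ[ℚ, -1, -(p : ℚ)])
    (hO : O = Submodule.span ℤ
      ({1, i, ((1 : ℚ)/2) • (1 + j), ((1 : ℚ)/2) • (i + k)} : Set ℍ[ℚ, -1, -(p : ℚ)]))
    (β₁ β₂ β₃ : ℍ[ℚ, -1, -(p : ℚ)])
    (hβ₁ : β₁ = 2 * i) (hβ₂ : β₂ = j) (hβ₃ : β₃ = i - k) :
    -- (a) the Gross lattice of `O` is spanned by `β₁, β₂, β₃`
    {y | ∃ x ∈ O, y = 2 * x - (x + star x)} =
      (Submodule.span ℤ ({β₁, β₂, β₃} : Set ℍ[ℚ, -1, -(p : ℚ)]) : Set ℍ[ℚ, -1, -(p : ℚ)]) ∧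
    -- (b) the Gram matrix of `(β₁, β₂, β₃)`
    (β₁ * star β₁).re = 4 ∧ (β₁ * star β₂).re = 0 ∧ (β₁ * star β₃).re = 2 ∧
    (β₂ * star β₂).re = (p : ℚ) ∧ (β₂ * star β₃).re = 0 ∧
    (β₃ * star β₃).re = (p : ℚ) + 1 ∧
    -- (c) the basis attains the successive minima `D₁ = 4`, `D₂ = p`, `D₃ = p + 1`
    LinearIndependent ℚ ![β₁, β₂, β₃] ∧
    (∀ w ∈ Submodule.span ℤ ({β₁, β₂, β₃} : Set ℍ[ℚ, -1, -(p : ℚ)]), w ≠ 0 →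
      4 ≤ (w * star w).re) ∧
    (∀ w ∈ Submodule.span ℤ ({β₁, β₂, β₃} : Set ℍ[ℚ, -1, -(p : ℚ)]),
      w ∉ Submodule.span ℚ ({β₁} : Set ℍ[ℚ, -1, -(p : ℚ)]) →
      (p : ℚ) ≤ (w * star w).re) ∧
    (∀ w ∈ Submodule.span ℤ ({β₁, β₂, β₃} : Set ℍ[ℚ, -1, -(p : ℚ)]),
      w ∉ Submodule.span ℚ ({β₁, β₂} : Set ℍ[ℚ, -1, -(p : ℚ)]) →
      (p : ℚ) + 1 ≤ (w * star w).re) := by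
  have hP7 : (7 : ℤ) ≤ (p : ℤ) := by omega
  have hk' : k = ⟨0, 0, 0, 1⟩ := by subst hk hi hj; ext <;> simp
  have hβ₁' : β₁ = ⟨0, 2, 0, 0⟩ := by subst hβ₁ hi; ext <;> simp [two_mul] <;> norm_num
  have hβ₂' : β₂ = ⟨0, 0, 1, 0⟩ := by rw [hβ₂, hj]
  have hβ₃' : β₃ = ⟨0, 1, 0, -1⟩ := by rw [hβ₃, hi, hk']; ext <;> simp <;> norm_num
  -- components of a general element of the ℤ-span
  have hcomp : ∀ (a b c : ℤ),
      (a • β₁ + b • β₂ + c • β₃ : ℍ[ℚ, -1, -(p:ℚ)]) =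
        ⟨0, 2 * a + c, b, -c⟩ := by
    intro a b c
    rw [hβ₁', hβ₂', hβ₃']
    ext <;> simp <;> ring
  -- decomposition of span membership
  have hdec : ∀ w ∈ Submodule.span ℤ ({β₁, β₂, β₃} : Set ℍ[ℚ, -1, -(p : ℚ)]),
      ∃ a b c : ℤ, w = a • β₁ + b • β₂ + c • β₃ := by
    intro w hw
    rw [show ({β₁, β₂, β₃} : Set ℍ[ℚ, -1, -(p : ℚ)]) = insert β₁ {β₂, β₃} from rfl,
      Submodule.mem_span_insert] at hw
    obtain ⟨a, z, hz, rfl⟩ := hw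
    rw [Submodule.mem_span_pair] at hz
    obtain ⟨b, c, rfl⟩ := hz
    exact ⟨a, b, c, (add_assoc _ _ _).symm⟩
  have hnrd : ∀ (a b c : ℤ),
      ((a • β₁ + b • β₂ + c • β₃ : ℍ[ℚ, -1, -(p:ℚ)]) *
        star (a • β₁ + b • β₂ + c • β₃)).re =
        (((2 * a + c) ^ 2 + (p : ℤ) * b ^ 2 + (p : ℤ) * c ^ 2 : ℤ) : ℚ) := by
    intro a b c
    rw [hcomp, nrd_formula]
    push_cast
    ring
  refine ⟨?_, ?_, ?_, ?_, ?_, ?_, ?_, ?_, ?_, ?_, ?_⟩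
  · exact part_a p i j k hi hj hk O hO β₁ β₂ β₃ hβ₁ hβ₂ hβ₃
  · rw [hβ₁', nrd_formula]; norm_num
  · rw [hβ₁', hβ₂']; simp [QuaternionAlgebra.re_mul]
  · rw [hβ₁', hβ₃']; simp [QuaternionAlgebra.re_mul]
  · rw [hβ₂', nrd_formula]; norm_num
  · rw [hβ₂', hβ₃']; simp [QuaternionAlgebra.re_mul]
  · rw [hβ₃', nrd_formula]; norm_num; ring
  · -- linear independence
    rw [Fintype.linearIndependent_iff]
    intro g hg
    rw [Fin.sum_univ_three] at hg
    simp only [Matrix.cons_val_zero, Matrix.cons_val_one, Matrix.head_cons,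
      Matrix.cons_val_two, Matrix.tail_cons] at hg
    rw [hβ₁', hβ₂', hβ₃'] at hg
    rw [QuaternionAlgebra.ext_iff] at hg
    simp at hg
    obtain ⟨h1, h2, h3⟩ := hg
    intro m
    fin_cases m <;> simp <;> linarith
  · -- D₁ = 4
    intro w hw hw0
    obtain ⟨a, b, c, rfl⟩ := hdec w hw
    rw [hnrd]
    have habc : ¬(a = 0 ∧ b = 0 ∧ c = 0) := by
      rintro ⟨rfl, rfl, rfl⟩
      simp at hw0
    have := ineq1 hP7 habc
    calc (4 : ℚ) = ((4 : ℤ) : ℚ) := by norm_num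
    _ ≤ _ := by exact_mod_cast this
  · -- D₂ = p
    intro w hw hw1
    obtain ⟨a, b, c, rfl⟩ := hdec w hw
    rw [hnrd]
    have hbc : ¬(b = 0 ∧ c = 0) := by
      rintro ⟨rfl, rfl⟩
      exact hw1 <| by
        simp only [zero_smul, add_zero]
        exact Submodule.mem_span_singleton.2 ⟨(a : ℚ), (Int.cast_smul_eq_zsmul ℚ a β₁)⟩
    have := ineq2 (a := a) hP7 hbc
    exact_mod_cast this
  · -- D₃ = p + 1
    intro w hw hw2
    obtain ⟨a, b, c, rfl⟩ := hdec w hw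
    rw [hnrd]
    have hc : c ≠ 0 := by
      rintro rfl
      exact hw2 <| by
        simp only [zero_smul, add_zero]
        exact Submodule.mem_span_pair.2 ⟨(a : ℚ), (b : ℚ),
          by rw [Int.cast_smul_eq_zsmul, Int.cast_smul_eq_zsmul]⟩
    have := ineq3 (a := a) (b := b) hP7 hc
    calc ((p : ℚ)) + 1 = (((p : ℤ) + 1 : ℤ) : ℚ) := by push_cast; ring
    _ ≤ _ := by exact_mod_cast this
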